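/- Let l ≥ 1, let n : Fin l → ℕ be positive, let J be a finite index type, and let m : J → ℕ be positive. If there exists an embedding of MV-algebras from ∏_{i<l} Ł_{n_i} into ∏_{j∈J} Ł_{m_j} (products with componentwise operations), then for every j ∈ J there exists i < l such that n_i divides m_j. -/

import Mathlib

/-- The carrier of the Łukasiewicz chain Łₙ : {k/n : k ∈ ℕ, 0 ≤ k ≤ n} ⊆ ℚ. -/
abbrev Luk (n : ℕ+) : Type := {x : ℚ // ∃ k : ℕ, k ≤ (n : ℕ) ∧ x = (k : ℚ) / (n : ℕ)}

/-- The constant 0 of Łₙ. -/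
def lukZero (n : ℕ+) : Luk n := ⟨0, 0, Nat.zero_le _, by simp⟩

/-- The negation ¬x = 1 - x of Łₙ. -/
def lukNeg {n : ℕ+} (x : Luk n) : Luk n :=
  ⟨1 - x.1, by
    obtain ⟨k, hk, hx⟩ := x.2
    refine ⟨(n : ℕ) - k, Nat.sub_le _ _, ?_⟩
    have hn : ((n : ℕ) : ℚ) ≠ 0 := by exact_mod_cast n.pos.ne'
    rw [hx, Nat.cast_sub hk, sub_div, div_self hn]⟩

/-- The truncated sum x ⊕ y = min 1 (x + y) of Łₙ. -/
def lukOplus {n : ℕ+} (x y : Luk n) : Luk n :=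
  ⟨min 1 (x.1 + y.1), by
    obtain ⟨k, hk, hx⟩ := x.2
    obtain ⟨j, hj, hy⟩ := y.2
    refine ⟨min (n : ℕ) (k + j), min_le_left _ _, ?_⟩
    have hn : (0 : ℚ) < ((n : ℕ) : ℚ) := by exact_mod_cast n.pos
    rw [hx, hy, ← add_div]
    rcases le_total (k + j) (n : ℕ) with h | h
    · rw [min_eq_right h, min_eq_right]
      · push_cast; ring_nf
      · rw [div_le_one hn]; exact_mod_cast h
    · rw [min_eq_left h, min_eq_left, div_self hn.ne']
      · rw [one_le_div hn]; exact_mod_cast h⟩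

/-- The constant 1 of Łₙ. -/
def lukOne (n : ℕ+) : Luk n :=
  ⟨1, (n : ℕ), le_refl _,
    (div_self (by exact_mod_cast n.pos.ne' : ((n : ℕ) : ℚ) ≠ 0)).symm⟩

lemma luk_nonneg {n : ℕ+} (x : Luk n) : 0 ≤ x.1 := by
  obtain ⟨k, hk, hx⟩ := x.2
  rw [hx]; positivity

lemma luk_le_one {n : ℕ+} (x : Luk n) : x.1 ≤ 1 := by
  obtain ⟨k, hk, hx⟩ := x.2
  rw [hx, div_le_one (by exact_mod_cast n.pos)]
  exact_mod_cast hk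

/-- Embed an element of the i₀-component as a tuple (zero elsewhere). -/
def lukEmb {l : ℕ} (n : Fin l → ℕ+) (i₀ : Fin l) (t : Luk (n i₀)) : ∀ i, Luk (n i) :=
  fun i => if h : i = i₀ then ⟨t.1, by rw [h]; exact t.2⟩ else lukZero (n i)

@[simp] lemma lukEmb_self {l : ℕ} (n : Fin l → ℕ+) (i₀ : Fin l) (t : Luk (n i₀)) :
    (lukEmb n i₀ t i₀).1 = t.1 := by simp [lukEmb]

@[simp] lemma lukEmb_ne {l : ℕ} (n : Fin l → ℕ+) (i₀ : Fin l) (t : Luk (n i₀))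
    {i : Fin l} (h : i ≠ i₀) : (lukEmb n i₀ t i).1 = 0 := by simp [lukEmb, h, lukZero]

lemma min_step (a : ℚ) (ha : 0 ≤ a) (k : ℕ) :
    min 1 (min 1 ((k : ℚ) * a) + a) = min 1 (((k : ℚ) + 1) * a) := by
  rcases le_total ((k : ℚ) * a) 1 with h | h
  · rw [min_eq_right h]; ring_nf
  · rw [min_eq_left h, min_eq_left (by linarith), min_eq_left (by nlinarith)]

/-- The one-component lemma: if some "unit vector" at i₀ maps to 1 in component j,
then n i₀ divides m j. -/
lemma chain_dvd {l : ℕ} (n : Fin l → ℕ+) {J : Type*} (m : J → ℕ+)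
    (f : (∀ i, Luk (n i)) → ∀ j, Luk (m j))
    (hplus : ∀ x y, f (fun i => lukOplus (x i) (y i)) = fun j => lukOplus (f x j) (f y j))
    (hneg : ∀ x, f (fun i => lukNeg (x i)) = fun j => lukNeg (f x j))
    (hzero : f (fun i => lukZero (n i)) = fun j => lukZero (m j))
    (j : J) (i₀ : Fin l)
    (hi₀ : f (fun i' => if i' = i₀ then lukOne (n i') else lukZero (n i')) j = lukOne (m j)) :
    (n i₀ : ℕ) ∣ (m j : ℕ) := by
  classical
  set e : ∀ i, Luk (n i) := fun i' => if i' = i₀ then lukOne (n i') else lukZero (n i') with he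
  set N : ℕ := (n i₀ : ℕ) with hNdef
  have hNpos : 0 < N := (n i₀).pos
  have hNQ : (0 : ℚ) < (N : ℚ) := by exact_mod_cast hNpos
  -- chain elements k/N (truncated)
  set c : ℕ → Luk (n i₀) := fun k =>
    ⟨((min k N : ℕ) : ℚ) / ((N : ℕ) : ℚ), min k N, min_le_right _ _, rfl⟩ with hc
  have cval : ∀ k : ℕ, k ≤ N → (c k).1 = (k : ℚ) / (N : ℚ) := by
    intro k hk; simp [hc, min_eq_left hk, min_eq_left (Nat.cast_le.mpr hk : (k : ℚ) ≤ N)]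
  set a : ℚ := (f (lukEmb n i₀ (c 1)) j).1 with ha
  have ha0 : 0 ≤ a := luk_nonneg _
  have ha1 : a ≤ 1 := luk_le_one _
  -- the oplus step
  have step : ∀ k : ℕ, k + 1 ≤ N →
      lukEmb n i₀ (c (k + 1)) =
        fun i => lukOplus (lukEmb n i₀ (c k) i) (lukEmb n i₀ (c 1) i) := by
    intro k hk
    funext i
    apply Subtype.ext
    show (lukEmb n i₀ (c (k + 1)) i).1 = min 1 ((lukEmb n i₀ (c k) i).1 + (lukEmb n i₀ (c 1) i).1)
    by_cases hcase : i = i₀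
    · subst hcase
      rw [lukEmb_self, lukEmb_self, lukEmb_self,
        cval _ hk, cval _ (by omega), cval _ (by omega), ← add_div]
      rw [min_eq_right]
      · push_cast; ring_nf
      · rw [div_le_one hNQ]; push_cast; exact_mod_cast hk
    · rw [lukEmb_ne _ _ _ hcase, lukEmb_ne _ _ _ hcase, lukEmb_ne _ _ _ hcase]
      norm_num
  -- main induction
  have main : ∀ k : ℕ, k ≤ N → (f (lukEmb n i₀ (c k)) j).1 = min 1 ((k : ℚ) * a) := by
    intro k
    induction k with
    | zero =>
      intro _
      have h0 : lukEmb n i₀ (c 0) = fun i => lukZero (n i) := by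
        funext i
        apply Subtype.ext
        by_cases hcase : i = i₀
        · subst hcase
          rw [lukEmb_self]
          show (c 0).1 = (lukZero (n i)).1
          simp [hc, lukZero]
        · rw [lukEmb_ne _ _ _ hcase]; rfl
      rw [h0, congrFun hzero j]
      simp [lukZero]
    | succ k ih =>
      intro hk
      rw [step k hk, congrFun (hplus _ _) j]
      show min 1 ((f (lukEmb n i₀ (c k)) j).1 + a) = _
      rw [ih (by omega)]
      push_cast
      exact min_step a ha0 k
  -- negation relation
  have hnegrel : (fun i => lukNeg (lukEmb n i₀ (c 1) i)) =
      fun i => lukOplus (lukEmb n i₀ (c (N - 1)) i) (lukNeg (e i)) := by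
    funext i
    apply Subtype.ext
    show 1 - (lukEmb n i₀ (c 1) i).1 =
      min 1 ((lukEmb n i₀ (c (N - 1)) i).1 + (1 - (e i).1))
    by_cases hcase : i = i₀
    · subst hcase
      rw [lukEmb_self, lukEmb_self, cval _ hNpos, cval _ (Nat.sub_le _ _)]
      have hev : (e i).1 = 1 := by simp [he, lukOne]
      rw [hev]
      have hsub : (((N - 1 : ℕ)) : ℚ) = (N : ℚ) - 1 := by
        rw [Nat.cast_sub hNpos]; norm_num
      rw [hsub, sub_self, add_zero, min_eq_right]
      · rw [sub_div, div_self hNQ.ne']; norm_num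
      · rw [div_le_one hNQ]; linarith
    · rw [lukEmb_ne _ _ _ hcase, lukEmb_ne _ _ _ hcase]
      have hev : (e i).1 = 0 := by simp [he, hcase, lukZero]
      rw [hev]; norm_num
  -- apply f to the negation relation
  have h0 : f (fun i => lukNeg (lukEmb n i₀ (c 1) i)) j =
      f (fun i => lukOplus (lukEmb n i₀ (c (N - 1)) i) (lukNeg (e i))) j := by
    rw [hnegrel]
  rw [congrFun (hneg (lukEmb n i₀ (c 1))) j, congrFun (hplus _ _) j,
    congrFun (hneg e) j, hi₀] at h0
  have hval := congrArg Subtype.val h0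
  have hval' : 1 - a = min 1 ((f (lukEmb n i₀ (c (N - 1))) j).1 + (1 - 1)) := hval
  rw [main _ (Nat.sub_le _ _), sub_self, add_zero,
    min_eq_right (min_le_left _ _)] at hval'
  -- derive N * a = 1
  have hNa : (N : ℚ) * a = 1 := by
    rcases le_total (((N - 1 : ℕ) : ℚ) * a) 1 with hle | hle
    · rw [min_eq_right hle] at hval'
      have hsub : (((N - 1 : ℕ)) : ℚ) = (N : ℚ) - 1 := by
        rw [Nat.cast_sub hNpos]; norm_num
      rw [hsub] at hval'
      nlinarith [hval']
    · rw [min_eq_left hle] at hval'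
      have haz : a = 0 := by linarith
      rw [haz, mul_zero] at hle
      norm_num at hle
  -- extract divisibility
  obtain ⟨p, hpM, hap⟩ := (f (lukEmb n i₀ (c 1)) j).2
  rw [← ha] at hap
  rw [hap] at hNa
  have hMQ : (0 : ℚ) < ((m j : ℕ) : ℚ) := by exact_mod_cast (m j).pos
  have hNp : (N : ℚ) * (p : ℚ) = ((m j : ℕ) : ℚ) := by
    field_simp at hNa
    linarith [hNa]
  have hNpnat : N * p = (m j : ℕ) := by exact_mod_cast hNp
  exact ⟨p, hNpnat.symm⟩

/-- If ∏ Ł_(n i) embeds into ∏ Ł_(m j) (J finite), then every m j is divided by some n i. -/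
theorem embed_prod_dvd_backward (l : ℕ) (hl : 1 ≤ l) (n : Fin l → ℕ+)
    (J : Type*) [Fintype J] (m : J → ℕ+)
    (h : ∃ f : (∀ i, Luk (n i)) → ∀ j, Luk (m j), Function.Injective f ∧
      (∀ x y, f (fun i => lukOplus (x i) (y i)) = fun j => lukOplus (f x j) (f y j)) ∧
      (∀ x, f (fun i => lukNeg (x i)) = fun j => lukNeg (f x j)) ∧
      (f (fun i => lukZero (n i)) = fun j => lukZero (m j))) :
    ∀ j : J, ∃ i : Fin l, (n i : ℕ) ∣ (m j : ℕ) := by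
  classical
  obtain ⟨f, -, hplus, hneg, hzero⟩ := h
  intro j
  -- unit vectors
  set e : Fin l → ∀ i, Luk (n i) :=
    fun i i' => if i' = i then lukOne (n i') else lukZero (n i') with he
  -- each f (e i) j is 0 or 1
  have hone : ∀ i : Fin l, f (e i) j = lukZero (m j) ∨ f (e i) j = lukOne (m j) := by
    intro i
    have hidem : (fun i' => lukOplus (e i i') (e i i')) = e i := by
      funext i'
      apply Subtype.ext
      show min 1 ((e i i').1 + (e i i').1) = (e i i').1
      by_cases hcase : i' = i <;> simp [he, hcase, lukOne, lukZero]
    have hv := congrFun (hplus (e i) (e i)) j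
    rw [hidem] at hv
    have hv' : (f (e i) j).1 = min 1 ((f (e i) j).1 + (f (e i) j).1) :=
      congrArg Subtype.val hv
    rcases le_total ((f (e i) j).1 + (f (e i) j).1) 1 with hle | hle
    · left
      apply Subtype.ext
      rw [min_eq_right hle] at hv'
      show (f (e i) j).1 = 0
      linarith
    · right
      apply Subtype.ext
      rw [min_eq_left hle] at hv'
      exact hv'
  -- some e i maps to one
  have hex : ∃ i, f (e i) j = lukOne (m j) := by
    by_contra hno
    push_neg at hno
    have hallz : ∀ i, f (e i) j = lukZero (m j) :=
      fun i => (hone i).resolve_right (hno i)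
    have key : ∀ s : Finset (Fin l),
        f (fun i' => if i' ∈ s then lukOne (n i') else lukZero (n i')) j = lukZero (m j) := by
      intro s
      induction s using Finset.induction_on with
      | empty =>
        have hE : (fun i' => if i' ∈ (∅ : Finset (Fin l)) then lukOne (n i') else lukZero (n i'))
            = fun i => lukZero (n i) := by
          funext i'; simp
        rw [hE, congrFun hzero j]
      | @insert i s hi ih =>
        have hE : (fun i' => if i' ∈ insert i s then lukOne (n i') else lukZero (n i'))
            = fun i' => lukOplus (e i i') (if i' ∈ s then lukOne (n i') else lukZero (n i')) := by
          funext i'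
          apply Subtype.ext
          show (if i' ∈ insert i s then lukOne (n i') else lukZero (n i')).1
            = min 1 ((e i i').1 + (if i' ∈ s then lukOne (n i') else lukZero (n i')).1)
          by_cases h1 : i' = i
          · subst h1
            simp [he, hi, lukOne, lukZero]
          · by_cases h2 : i' ∈ s <;>
              simp [he, h1, h2, lukOne, lukZero]
        rw [hE, congrFun (hplus _ _) j, hallz i, ih]
        apply Subtype.ext
        show min 1 ((0 : ℚ) + 0) = 0
        norm_num
    have h1 := key Finset.univ
    have hE1 : (fun i' => if i' ∈ (Finset.univ : Finset (Fin l)) then lukOne (n i')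
        else lukZero (n i')) = fun i => lukNeg (lukZero (n i)) := by
      funext i'
      apply Subtype.ext
      show (if i' ∈ Finset.univ then lukOne (n i') else lukZero (n i')).1
        = (lukNeg (lukZero (n i'))).1
      rw [if_pos (Finset.mem_univ i')]
      show (1 : ℚ) = 1 - 0
      norm_num
    rw [hE1, congrFun (hneg _) j, congrFun hzero j] at h1
    have := congrArg Subtype.val h1
    simp [lukNeg, lukZero] at this
  obtain ⟨i₀, hi₀⟩ := hex
  exact ⟨i₀, chain_dvd n m f hplus hneg hzero j i₀ hi₀⟩
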